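/- If G is a non-abelian CSA group and A, B are nontrivial normal subgroups of G, then the commutator subgroup [A, B] is nontrivial; in particular A ∩ B ≠ {e}. -/

import Mathlib

universe u

/-- Every commutative subgroup is contained in a maximal commutative subgroup. -/
lemma exists_maximal_comm {G : Type u} [Group G] (H : Subgroup G)
    (hH : IsMulCommutative H) :
    ∃ M : Subgroup G, H ≤ M ∧ Maximal (fun H : Subgroup G => IsMulCommutative H) M := by
  obtain ⟨M, hHM, hM⟩ := zorn_le_nonempty₀ {K : Subgroup G | IsMulCommutative K}
    (fun c hc hchain y hy => by
      refine ⟨sSup c, ?_, fun z hz => le_sSup hz⟩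
      refine ⟨⟨fun ⟨a, ha⟩ ⟨b, hb⟩ => ?_⟩⟩
      have hdir : DirectedOn (· ≤ ·) c := hchain.directedOn
      rw [Subgroup.mem_sSup_of_directedOn ⟨y, hy⟩ hdir] at ha hb
      obtain ⟨K₁, hK₁, haK⟩ := ha
      obtain ⟨K₂, hK₂, hbK⟩ := hb
      obtain ⟨K, hKc, h1, h2⟩ := hdir K₁ hK₁ K₂ hK₂
      haveI : IsMulCommutative K := hc hKc
      ext
      exact Subgroup.mul_comm_of_mem_isMulCommutative K (h1 haK) (h2 hbK))
    H hH
  exact ⟨M, hHM, hM⟩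

/-- A group is *CSA* if every maximal abelian subgroup `A` is malnormal:
for every `g ∉ A`, `A ⊓ gAg⁻¹ = ⊥`. -/
def IsCSA (G : Type u) [Group G] : Prop :=
  ∀ A : Subgroup G, Maximal (fun H : Subgroup G => IsMulCommutative H) A →
    ∀ g : G, g ∉ A → A ⊓ Subgroup.map (MulAut.conj g).toMonoidHom A = ⊥

/-- If `A` and `B` are nontrivial normal subgroups of a non-abelian CSA group,
then the commutator subgroup `⁅A, B⁆` is nontrivial; in particular
`A ⊓ B ≠ ⊥`. -/
theorem stmt_7 (G : Type u) [Group G] (hcsa : IsCSA G)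
    (hna : ∃ a b : G, a * b ≠ b * a)
    (A B : Subgroup G) (hA : A.Normal) (hB : B.Normal)
    (hAnt : A ≠ ⊥) (hBnt : B ≠ ⊥) :
    ⁅A, B⁆ ≠ ⊥ ∧ A ⊓ B ≠ ⊥ := by
  have hle : ⁅A, B⁆ ≤ A ⊓ B := by
    rw [Subgroup.commutator_le]
    intro a ha b hb
    constructor
    · have : a * (b * a⁻¹ * b⁻¹) ∈ A := A.mul_mem ha (by
        have := hA.conj_mem a⁻¹ (A.inv_mem ha) b
        simpa [mul_assoc] using this)
      simpa [commutatorElement_def, mul_assoc] using this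
    · have : (a * b * a⁻¹) * b⁻¹ ∈ B := B.mul_mem (hB.conj_mem b hb a) (B.inv_mem hb)
      simpa [commutatorElement_def, mul_assoc] using this
  have main : ⁅A, B⁆ ≠ ⊥ := by
    intro hbot
    have hcomm : ∀ a ∈ A, ∀ b ∈ B, a * b = b * a := by
      intro a ha b hb
      open scoped commutatorElement in have : (⁅a, b⁆ : G) ∈ ⁅A, B⁆ := Subgroup.commutator_mem_commutator ha hb
      rw [hbot, Subgroup.mem_bot] at this
      have := commutatorElement_eq_one_iff_mul_comm.mp this
      exact this
    have hA' : ∃ a ∈ A, a ≠ (1 : G) := by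
      rw [Subgroup.ne_bot_iff_exists_ne_one] at hAnt
      obtain ⟨⟨a, haA⟩, ha⟩ := hAnt
      exact ⟨a, haA, fun h => ha (Subtype.ext h)⟩
    have hB' : ∃ b ∈ B, b ≠ (1 : G) := by
      rw [Subgroup.ne_bot_iff_exists_ne_one] at hBnt
      obtain ⟨⟨b, hbB⟩, hb⟩ := hBnt
      exact ⟨b, hbB, fun h => hb (Subtype.ext h)⟩
    obtain ⟨a, haA, ha1⟩ := hA'
    obtain ⟨b, hbB, hb1⟩ := hB'
    obtain ⟨M, hzM, hM⟩ := exists_maximal_comm (Subgroup.zpowers a)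
      (Subgroup.zpowers_isMulCommutative a)
    have haM : a ∈ M := hzM (Subgroup.mem_zpowers a)
    -- centralizer of a is in M
    have hcent : ∀ x : G, x * a = a * x → x ∈ M := by
      intro x hx
      by_contra hxM
      have h := hcsa M hM x hxM
      have : a ∈ M ⊓ Subgroup.map (MulAut.conj x).toMonoidHom M := by
        refine ⟨haM, ⟨a, haM, ?_⟩⟩
        simp only [MulEquiv.coe_toMonoidHom, MulAut.conj_apply]
        rw [hx, mul_inv_cancel_right]
      rw [h, Subgroup.mem_bot] at this
      exact ha1 this
    have hBM : ∀ y ∈ B, y ∈ M := fun y hy =>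
      hcent y ((hcomm a haA y hy).symm)
    have hbM : b ∈ M := hBM b hbB
    -- every g is in M
    have hall : ∀ g : G, g ∈ M := by
      intro g
      by_contra hgM
      have h := hcsa M hM g hgM
      have hconj : g * b * g⁻¹ ∈ M ⊓ Subgroup.map (MulAut.conj g).toMonoidHom M := by
        refine ⟨hBM _ (hB.conj_mem b hbB g), ⟨b, hbM, ?_⟩⟩
        simp [MulAut.conj_apply]
      rw [h, Subgroup.mem_bot] at hconj
      exact hb1 (by
        have : b = g⁻¹ * (g * b * g⁻¹) * g := by group
        rw [this, hconj]; group)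
    obtain ⟨x, y, hxy⟩ := hna
    have := hM.prop
    exact hxy (Subgroup.mul_comm_of_mem_isMulCommutative M (hall x) (hall y))
  refine ⟨main, fun h => main (le_antisymm (h ▸ hle) bot_le)⟩
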